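/- Let q ≥ 2, let n and d be positive integers with 0 < w < n, and suppose there exists an (n,d)_q-code of size M, i.e., a subset C ⊆ (ZMod q)^n with |C| = M in which any two distinct elements are at Hamming distance at least d. Then there exists a set D ⊆ (ZMod 2)^{n+1} of binary words of length n+1, each of Hamming weight exactly w, such that any two distinct elements of D are at Hamming distance at least 2·⌊(d+1)/2⌋ and q^n · |D| ≥ M · (C(n,w-1) + C(n,w)), where C(n,k) denotes the binomial coefficient; equivalently, A(n+1, 2·⌊(d+1)/2⌋, w) ≥ ⌈M · (C(n,w-1) + C(n,w)) / q^n⌉. -/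

import Mathlib

open Finset

lemma even_hd {m : ℕ} (u v : Fin m → ZMod 2) (h : hammingNorm u = hammingNorm v) :
    Even (hammingDist u v) := by
  classical
  have h2 : ∀ a b : ZMod 2, (a ≠ b) ↔ ((a ≠ 0 ∧ b = 0) ∨ (b ≠ 0 ∧ a = 0)) := by decide
  set A : Finset (Fin m) := univ.filter (fun i => u i ≠ 0) with hA
  set B : Finset (Fin m) := univ.filter (fun i => v i ≠ 0) with hB
  have hcd : hammingDist u v = (A \ B).card + (B \ A).card := by
    have hsets : (univ.filter fun i => u i ≠ v i) = (A \ B) ∪ (B \ A) := by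
      ext i
      simp only [Finset.mem_filter, Finset.mem_univ, true_and, Finset.mem_union,
        Finset.mem_sdiff, hA, hB, h2 (u i) (v i)]
      tauto
    unfold hammingDist
    rw [hsets, Finset.card_union_of_disjoint disjoint_sdiff_sdiff]
  have h1 : (A \ B).card + (A ∩ B).card = A.card := Finset.card_sdiff_add_card_inter A B
  have h2' : (B \ A).card + (B ∩ A).card = B.card := Finset.card_sdiff_add_card_inter B A
  have hAB : A.card = B.card := h
  have hint : (A ∩ B).card = (B ∩ A).card := by rw [Finset.inter_comm]
  rw [hcd]
  exact ⟨(A \ B).card, by omega⟩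

/-- Theorem 2.3(ii): if there exists an `(n,d)_q`-code of size `M` and
`0 < w < n`, then there exists a binary constant-weight code
`D ⊆ (ZMod 2)^{n+1}` of weight `w` and minimum distance at least
`2⌊(d+1)/2⌋` with `q^n · |D| ≥ M · (C(n,w-1) + C(n,w))`, i.e.
`A(n+1, 2⌊(d+1)/2⌋, w) ≥ ⌈M·(C(n,w-1)+C(n,w))/q^n⌉`. -/
theorem stmt_8 (q n d M w : ℕ) (hq : 2 ≤ q) (hn : 0 < n) (hd : 0 < d)
    (hw : 0 < w) (hwn : w < n)
    (C : Set (Fin n → ZMod q)) (hCfin : C.Finite) (hM : C.ncard = M)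
    (hC : ∀ x ∈ C, ∀ y ∈ C, x ≠ y → d ≤ hammingDist x y) :
    ∃ D : Set (Fin (n + 1) → ZMod 2),
      D.Finite ∧
      (∀ x ∈ D, hammingNorm x = w) ∧
      (∀ x ∈ D, ∀ y ∈ D, x ≠ y → 2 * ((d + 1) / 2) ≤ hammingDist x y) ∧
      M * (n.choose (w - 1) + n.choose w) ≤ q ^ n * D.ncard := by
  classical
  haveI : NeZero q := ⟨by omega⟩
  haveI : Fact (1 < q) := ⟨by omega⟩
  -- the embedding
  set f : (Fin (n + 1) → ZMod 2) → (Fin n → ZMod q) :=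
    fun u i => if u i.castSucc = 1 then 1 else 0 with hf
  have hLip : ∀ u v, hammingDist (f u) (f v) ≤ hammingDist u v := by
    intro u v
    unfold hammingDist
    apply Finset.card_le_card_of_injOn (fun i => Fin.castSucc i)
    · intro i hi
      simp only [Finset.coe_filter, Set.mem_setOf_eq, Finset.mem_filter, Finset.mem_univ, true_and, hf] at hi ⊢
      intro hcon
      exact hi (by rw [hcon])
    · exact fun a _ b _ hab => Fin.castSucc_injective n hab
  have hfeq : ∀ u v : Fin (n + 1) → ZMod 2, f u = f v →
      ∀ i : Fin n, u i.castSucc = v i.castSucc := by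
    intro u v huv i
    have := congrFun huv i
    simp only [hf] at this
    have h01 : ∀ a : ZMod 2, a = 0 ∨ a = 1 := by decide
    have hone : (1 : ZMod q) ≠ 0 := one_ne_zero
    rcases h01 (u i.castSucc) with h1 | h1 <;> rcases h01 (v i.castSucc) with h2 | h2 <;>
      simp_all
  -- the set of weight-w words
  set B : Finset (Fin (n + 1) → ZMod 2) := univ.filter (fun u => hammingNorm u = w) with hB
  have hCard : B.card = (n + 1).choose w := by
    have hpc : ((univ : Finset (Fin (n + 1))).powersetCard w).card = (n + 1).choose w := by
      simp [Finset.card_powersetCard]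
    rw [← hpc]
    apply Finset.card_bij (fun u _ => univ.filter (fun i => u i ≠ 0))
    · intro u hu
      simp only [hB, Finset.mem_filter, Finset.mem_univ, true_and] at hu
      simp only [Finset.mem_powersetCard]
      exact ⟨Finset.filter_subset _ _, hu⟩
    · intro u hu v hv huv
      funext i
      have h1 : ∀ a : ZMod 2, a ≠ 0 → a = 1 := by decide
      have := Finset.ext_iff.mp huv i
      simp only [Finset.mem_filter, Finset.mem_univ, true_and] at this
      by_cases h : u i = 0
      · by_cases h' : v i = 0
        · rw [h, h']
        · exact absurd (this.mpr h') (by simp [h])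
      · rw [h1 _ h, h1 _ (this.mp h)]
    · intro S hS
      simp only [Finset.mem_powersetCard] at hS
      refine ⟨fun i => if i ∈ S then 1 else 0, ?_, ?_⟩
      · simp only [hB, Finset.mem_filter, Finset.mem_univ, true_and, hammingNorm]
        rw [← hS.2]
        congr 1
        ext i
        by_cases h : i ∈ S <;> simp [h]
      · ext i
        by_cases h : i ∈ S <;> simp [h]
  -- counting
  set Cf : Finset (Fin n → ZMod q) := hCfin.toFinset with hCf
  have hCfcard : Cf.card = M := by
    rw [← hM, ← hCfin.coe_toFinset, Set.ncard_coe_finset]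
  have hTotal : ∑ z : Fin n → ZMod q, (B.filter (fun u => f u - z ∈ Cf)).card
      = B.card * M := by
    have heach : ∀ z, (B.filter (fun u => f u - z ∈ Cf)).card
        = ∑ u ∈ B, if f u - z ∈ Cf then 1 else 0 := fun z => Finset.card_filter _ _
    simp_rw [heach]
    rw [Finset.sum_comm]
    have hu : ∀ u, (∑ z : Fin n → ZMod q, if f u - z ∈ Cf then 1 else 0) = M := by
      intro u
      rw [Finset.sum_boole]
      rw [← hCfcard]
      norm_cast
      apply Finset.card_bij (fun z _ => f u - z)
      · intro z hz
        simpa using (Finset.mem_filter.mp hz).2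
      · intro z1 _ z2 _ h
        exact sub_right_injective h
      · intro c hc
        exact ⟨f u - c, by simp [hc, sub_sub_cancel], sub_sub_cancel _ _⟩
    simp_rw [hu]
    rw [Finset.sum_const, smul_eq_mul]
  -- pigeonhole
  have hcardfun : Fintype.card (Fin n → ZMod q) = q ^ n := by
    simp [ZMod.card]
  obtain ⟨z0, -, hz0⟩ := Finset.exists_max_image (univ : Finset (Fin n → ZMod q))
    (fun z => (B.filter (fun u => f u - z ∈ Cf)).card) ⟨0, Finset.mem_univ 0⟩
  have hpig : B.card * M ≤ q ^ n * (B.filter (fun u => f u - z0 ∈ Cf)).card := by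
    rw [← hTotal, ← hcardfun]
    calc ∑ z : Fin n → ZMod q, (B.filter (fun u => f u - z ∈ Cf)).card
        ≤ ∑ _z : Fin n → ZMod q, (B.filter (fun u => f u - z0 ∈ Cf)).card :=
          Finset.sum_le_sum (fun z hz => hz0 z hz)
      _ = Fintype.card (Fin n → ZMod q) * (B.filter (fun u => f u - z0 ∈ Cf)).card := by
          rw [Finset.sum_const, Finset.card_univ, smul_eq_mul]
  set Df : Finset (Fin (n + 1) → ZMod 2) := B.filter (fun u => f u - z0 ∈ Cf) with hDf
  refine ⟨↑Df, Df.finite_toSet, ?_, ?_, ?_⟩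
  · intro x hx
    have := Finset.mem_filter.mp (by exact_mod_cast hx)
    exact (Finset.mem_filter.mp this.1).2
  · intro x hx y hy hxy
    have hx' := Finset.mem_filter.mp (by exact_mod_cast hx)
    have hy' := Finset.mem_filter.mp (by exact_mod_cast hy)
    have hwx : hammingNorm x = w := (Finset.mem_filter.mp hx'.1).2
    have hwy : hammingNorm y = w := (Finset.mem_filter.mp hy'.1).2
    have heven := even_hd x y (hwx.trans hwy.symm)
    by_cases hfxy : f x = f y
    · -- then x = y : contradiction
      exfalso
      have hle : hammingDist x y ≤ 1 := by
        unfold hammingDist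
        have : (univ.filter (fun i => x i ≠ y i)) ⊆ {Fin.last n} := by
          intro i hi
          simp only [Finset.mem_filter, Finset.mem_univ, true_and] at hi
          simp only [Finset.mem_singleton]
          by_contra hne
          obtain ⟨j, rfl⟩ := Fin.exists_castSucc_eq.mpr hne
          exact hi (hfeq x y hfxy j)
        calc _ ≤ ({Fin.last n} : Finset _).card := Finset.card_le_card this
          _ = 1 := Finset.card_singleton _
      obtain ⟨k, hk⟩ := heven
      interval_cases h : hammingDist x y
      · exact hxy (hammingDist_eq_zero.mp h)
      · omega
    · have hdx : f x - z0 ∈ C := by simpa [hCf] using hx'.2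
      have hdy : f y - z0 ∈ C := by simpa [hCf] using hy'.2
      have hne : f x - z0 ≠ f y - z0 := fun h => hfxy (by
        have := congrArg (· + z0) h; simpa using this)
      have hd1 : d ≤ hammingDist (f x - z0) (f y - z0) := hC _ hdx _ hdy hne
      have hd2 : hammingDist (f x - z0) (f y - z0) = hammingDist (f x) (f y) := by
        simp [hammingDist, sub_left_inj]
      have : d ≤ hammingDist x y := le_trans (hd2 ▸ hd1) (hLip x y)
      obtain ⟨k, hk⟩ := heven
      omega
  · have hBcard : B.card = n.choose (w - 1) + n.choose w := by
      rw [hCard]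
      obtain ⟨w', rfl⟩ : ∃ w', w = w' + 1 := ⟨w - 1, by omega⟩
      simp [Nat.choose_succ_succ]
    rw [Set.ncard_coe_finset]
    calc M * (n.choose (w - 1) + n.choose w) = B.card * M := by rw [hBcard]; ring
      _ ≤ q ^ n * Df.card := hpig
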